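/- arXiv:2409.07052 — 2 statements merged into one kernel-verified Lean document; each statement's English description precedes it below -/
import Mathlib

section
/- Let α ∈ (1,2] and γ > 0. There exists a constant C = C(α,γ) > 0 such that for all x ∈ ℝ, |(−Δ)^{γ/2}G(x)| ≤ C / (1 + |x|^{1+γ}). -/
open MeasureTheory

/-- The fractional Laplacian of the kernel `G`:
`(−Δ)^{γ/2}G(x) = (1/(2π)) ∫_ℝ |ξ|^γ exp(−iξx − |ξ|^α) dξ` (real part). -/
noncomputable def fracLapGKernel (α γ : ℝ) (x : ℝ) : ℝ :=
  (1 / (2 * Real.pi)) *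
    ∫ ξ : ℝ, |ξ| ^ γ *
      (Complex.exp (-(Complex.I * (ξ : ℂ) * (x : ℂ)) - ((|ξ| ^ α : ℝ) : ℂ))).re

open MeasureTheory Set Real Filter Complex Topology


noncomputable def fracE (α γ x θ r : ℝ) : ℂ :=
  -(Complex.I*(γ+1)*θ) - ((r^α : ℝ) : ℂ) * Complex.exp (-(Complex.I*α*θ))
    - Complex.I*x*r*Complex.exp (-(Complex.I*θ))

lemma fracE_re (α γ x θ r : ℝ) :
    (fracE α γ x θ r).re = -(r^α * Real.cos (α*θ)) - x*r*Real.sin θ := by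
  simp [fracE, Complex.exp_re, Complex.exp_im, Complex.cos_ofReal_re]

noncomputable def fracF (α γ x θ r : ℝ) : ℂ := ((r^γ : ℝ) : ℂ) * Complex.exp (fracE α γ x θ r)
noncomputable def fracD (α γ x θ r : ℝ) : ℂ :=
  fracF α γ x θ r * (-(Complex.I*(γ+1)) + Complex.I*α*((r^α : ℝ):ℂ)*Complex.exp (-(Complex.I*α*θ))
    - x*r*Complex.exp (-(Complex.I*θ)))

-- derivative of θ ↦ exp (c * θ)
lemma hasDerivAt_cexp_linear (c : ℂ) (θ : ℝ) :
    HasDerivAt (fun θ : ℝ => Complex.exp (c * θ)) (c * Complex.exp (c * θ)) θ := by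
  have h1 : HasDerivAt (fun θ : ℝ => (θ:ℂ)) 1 θ := Complex.ofRealCLM.hasDerivAt
  have := ((h1.const_mul c).cexp)
  simpa [mul_comm] using this

lemma hasDerivAt_fracE_theta (α γ x r : ℝ) (θ : ℝ) :
    HasDerivAt (fun θ => fracE α γ x θ r)
      (-(Complex.I*(γ+1)) + Complex.I*α*((r^α : ℝ):ℂ)*Complex.exp (-(Complex.I*α*θ))
        - x*r*Complex.exp (-(Complex.I*θ))) θ := by
  have h1 : HasDerivAt (fun θ : ℝ => -(Complex.I*(γ+1)*(θ:ℂ))) (-(Complex.I*(γ+1))) θ := by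
    have : HasDerivAt (fun θ : ℝ => (θ:ℂ)) 1 θ := Complex.ofRealCLM.hasDerivAt
    simpa [Pi.neg_def] using (this.const_mul (Complex.I*(γ+1))).neg
  have h2 : HasDerivAt (fun θ : ℝ => ((r^α : ℝ):ℂ) * Complex.exp (-(Complex.I*α*θ)))
      (((r^α : ℝ):ℂ) * (-(Complex.I*α) * Complex.exp (-(Complex.I*α*θ)))) θ := by
    have := (hasDerivAt_cexp_linear (-(Complex.I*α)) θ).const_mul ((r^α : ℝ):ℂ)
    simpa [neg_mul, mul_assoc] using this
  have h3 : HasDerivAt (fun θ : ℝ => Complex.I*x*r*Complex.exp (-(Complex.I*θ)))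
      (Complex.I*x*r*(-Complex.I * Complex.exp (-(Complex.I*θ)))) θ := by
    have := (hasDerivAt_cexp_linear (-Complex.I) θ).const_mul (Complex.I*(x:ℂ)*(r:ℂ))
    simpa [neg_mul, mul_assoc] using this
  have := (h1.sub h2).sub h3
  convert this using 1
  · rfl
  · rfl
  linear_combination (-(x:ℂ)*r*Complex.exp (-(Complex.I*(θ:ℂ)))) * Complex.I_sq

noncomputable def fracG (α γ x θ r : ℝ) : ℂ := ((r^(γ+1) : ℝ) : ℂ) * Complex.exp (fracE α γ x θ r)

lemma hasDerivAt_fracF_theta (α γ x r : ℝ) (θ : ℝ) :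
    HasDerivAt (fun θ => fracF α γ x θ r) (fracD α γ x θ r) θ := by
  have := ((hasDerivAt_fracE_theta α γ x r θ).cexp).const_mul ((r^γ : ℝ):ℂ)
  convert this using 1
  · rfl
  · rfl
  rw [fracD, fracF]; ring

lemma hasDerivAt_fracE_r (α γ x θ r : ℝ) (hr : 0 < r) (hα : 0 < α) :
    HasDerivAt (fun r => fracE α γ x θ r)
      (-(((α*r^(α-1) : ℝ):ℂ) * Complex.exp (-(Complex.I*α*θ)))
        - Complex.I*x*Complex.exp (-(Complex.I*θ))) r := by
  have h2 : HasDerivAt (fun r : ℝ => ((r^α : ℝ):ℂ) * Complex.exp (-(Complex.I*α*θ)))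
      (((α*r^(α-1) : ℝ):ℂ) * Complex.exp (-(Complex.I*α*θ))) r :=
    ((Real.hasDerivAt_rpow_const (Or.inl hr.ne')).ofReal_comp).mul_const _
  have h3 : HasDerivAt (fun r : ℝ => Complex.I*x*r*Complex.exp (-(Complex.I*θ)))
      (Complex.I*x*Complex.exp (-(Complex.I*θ))) r := by
    have h0 : HasDerivAt (fun r : ℝ => (r:ℂ)) 1 r := Complex.ofRealCLM.hasDerivAt
    have := (h0.const_mul (Complex.I*(x:ℂ))).mul_const (Complex.exp (-(Complex.I*θ)))
    convert this using 1
    · rfl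
    ring
  have h1 : HasDerivAt (fun _ : ℝ => -(Complex.I*((γ:ℂ)+1)*(θ:ℂ))) 0 r := hasDerivAt_const _ _
  have := (h1.sub h2).sub h3
  convert this using 1
  · rfl
  · rfl
  ring

lemma hasDerivAt_fracG_r (α γ x θ r : ℝ) (hr : 0 < r) (hα : 0 < α) (hγ : 0 < γ) :
    HasDerivAt (fun r => fracG α γ x θ r) (Complex.I * fracD α γ x θ r) r := by
  have h1 : HasDerivAt (fun r : ℝ => ((r^(γ+1) : ℝ):ℂ)) (((γ+1)*r^γ : ℝ):ℂ) r := by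
    have := (Real.hasDerivAt_rpow_const (x := r) (p := γ+1) (Or.inl hr.ne')).ofReal_comp
    simpa using this
  have h2 := (hasDerivAt_fracE_r α γ x θ r hr hα).cexp
  have := h1.mul h2
  convert this using 1
  · rfl
  · rfl
  -- algebraic identity
  have e1 : ((r:ℝ)^(γ+1) : ℝ) = r^γ * r := Real.rpow_add_one hr.ne' γ
  have e3 : (r:ℝ)^(α-1) * r = r^α := by
    rw [← Real.rpow_add_one hr.ne' (α-1)]; norm_num
  have e2 : (r:ℝ)^(γ+1) * (α*r^(α-1)) = r^γ * (α * r^α) := by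
    calc (r:ℝ)^(γ+1) * (α*r^(α-1)) = α*(r^γ * (r^(α-1)*r)) := by rw [e1]; ring
    _ = r^γ * (α * r^α) := by rw [e3]; ring
  simp only [fracD, fracF]
  push_cast [e1, e2]
  set e := cexp (fracE α γ x θ r)
  have e3c : (r:ℂ) * ((r^(α-1):ℝ):ℂ) = ((r^α : ℝ):ℂ) := by
    rw [← Complex.ofReal_mul, mul_comm, e3]
  linear_combination (((r^γ:ℝ):ℂ)*e*((α:ℂ)*((r^α:ℝ):ℂ)*Complex.exp (-(Complex.I*(α:ℂ)*(θ:ℂ))) - ((γ:ℂ)+1))) * Complex.I_sq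
    + ((α:ℂ)*((r^γ:ℝ):ℂ)*Complex.exp (-(Complex.I*(α:ℂ)*(θ:ℂ)))*e) * e3c

lemma fracF_norm (α γ x θ r : ℝ) (hr : 0 ≤ r) :
    ‖fracF α γ x θ r‖ = r^γ * Real.exp (-(r^α * Real.cos (α*θ)) - x*r*Real.sin θ) := by
  rw [fracF, norm_mul, Complex.norm_exp, fracE_re,
    Complex.norm_real, Real.norm_eq_abs, _root_.abs_of_nonneg (Real.rpow_nonneg hr γ)]

noncomputable def fracC3 : ℝ := Real.cos (3*Real.pi/8)
noncomputable def fracR0 (α x : ℝ) : ℝ := max 1 ((2*x/fracC3)^(1/(α-1)))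
noncomputable def fracM (α x : ℝ) : ℝ := Real.exp (x * fracR0 α x)

lemma fracC3_pos : 0 < fracC3 := by
  apply Real.cos_pos_of_mem_Ioo
  constructor
  · nlinarith [Real.pi_pos]
  · nlinarith [Real.pi_pos]

lemma fracR0_pos (α x : ℝ) : 0 < fracR0 α x := lt_of_lt_of_le one_pos (le_max_left _ _)

lemma frac_young {α x : ℝ} (hα : 1 < α) (hx : 0 ≤ x) {r : ℝ} (hr : 0 ≤ r) :
    x*r ≤ x * fracR0 α x + (fracC3/2) * r^α := by
  rcases le_or_gt r (fracR0 α x) with h | h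
  · have h1 : x*r ≤ x * fracR0 α x := mul_le_mul_of_nonneg_left h hx
    have h2 : 0 ≤ (fracC3/2) * r^α := by
      have := fracC3_pos
      positivity
    linarith
  · have hr0 : (0:ℝ) < fracR0 α x := fracR0_pos α x
    have hrpos : 0 < r := lt_trans hr0 h
    have hc := fracC3_pos
    have h1 : (2*x/fracC3) ≤ r^(α-1) := by
      have hb : (2*x/fracC3)^(1/(α-1)) ≤ fracR0 α x := le_max_right _ _
      have h2 : ((2*x/fracC3)^(1/(α-1)))^(α-1) ≤ (fracR0 α x)^(α-1) :=
        Real.rpow_le_rpow (Real.rpow_nonneg (by positivity) _) hb (by linarith)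
      have h3 : ((2*x/fracC3)^(1/(α-1)))^(α-1) = 2*x/fracC3 := by
        rw [← Real.rpow_mul (by positivity), one_div_mul_cancel (by linarith : α - 1 ≠ 0),
          Real.rpow_one]
      have h4 : (fracR0 α x)^(α-1) ≤ r^(α-1) :=
        Real.rpow_le_rpow hr0.le h.le (by linarith)
      linarith
    have h5 : x * r ≤ (fracC3/2) * r^α := by
      have h6 : r^α = r^(α-1) * r := by
        rw [← Real.rpow_add_one hrpos.ne' (α-1)]; norm_num
      rw [h6]
      have h7 : x ≤ (fracC3/2) * r^(α-1) := by
        have := mul_le_mul_of_nonneg_left h1 (le_of_lt (half_pos hc))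
        calc x = (fracC3/2) * (2*x/fracC3) := by field_simp
        _ ≤ (fracC3/2) * r^(α-1) := this
      calc x * r ≤ ((fracC3/2) * r^(α-1)) * r := mul_le_mul_of_nonneg_right h7 hr
      _ = fracC3/2 * (r^(α-1)*r) := by ring
    have h8 : 0 ≤ x * fracR0 α x := mul_nonneg hx hr0.le
    linarith

lemma frac_norm_aux {α γ x θ : ℝ} (p : ℝ) (hα : 1 < α) (hx : 0 ≤ x)
    (hθ : |α*θ| ≤ 3*Real.pi/8) {r : ℝ} (hr : 0 ≤ r) :
    ‖((r^p:ℝ):ℂ) * Complex.exp (fracE α γ x θ r)‖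
      ≤ fracM α x * (r^p * Real.exp (-(fracC3/2) * r^α)) := by
  rw [norm_mul, Complex.norm_exp, fracE_re,
    Complex.norm_real, Real.norm_eq_abs, _root_.abs_of_nonneg (Real.rpow_nonneg hr p)]
  have hcos : fracC3 ≤ Real.cos (α*θ) := by
    rw [← Real.cos_abs]
    exact Real.cos_le_cos_of_nonneg_of_le_pi (abs_nonneg _)
      (by nlinarith [Real.pi_pos]) hθ
  have hsin : -(x*r*Real.sin θ) ≤ x*r := by
    nlinarith [Real.neg_one_le_sin θ, mul_nonneg hx hr]
  have hexp : -(r^α * Real.cos (α*θ)) - x*r*Real.sin θ ≤ x * fracR0 α x + (-(fracC3/2) * r^α) := by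
    have h1 : r^α * fracC3 ≤ r^α * Real.cos (α*θ) :=
      mul_le_mul_of_nonneg_left hcos (Real.rpow_nonneg hr α)
    have h2 := frac_young hα hx hr
    nlinarith
  calc r^p * Real.exp (-(r^α * Real.cos (α*θ)) - x*r*Real.sin θ)
      ≤ r^p * Real.exp (x * fracR0 α x + (-(fracC3/2) * r^α)) :=
        mul_le_mul_of_nonneg_left (Real.exp_le_exp.2 hexp) (Real.rpow_nonneg hr p)
    _ = fracM α x * (r^p * Real.exp (-(fracC3/2) * r^α)) := by
        rw [Real.exp_add, fracM]; ring

lemma frac_cont_rpow (p : ℝ) (hp : 0 ≤ p) : Continuous (fun r : ℝ => ((r^p : ℝ) : ℂ)) :=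
  Complex.continuous_ofReal.comp
    (continuous_iff_continuousAt.2 fun r => Real.continuousAt_rpow_const r p (Or.inr hp))

lemma fracE_cont (α γ x θ : ℝ) (hα : 0 ≤ α) : Continuous (fun r => fracE α γ x θ r) := by
  unfold fracE
  apply Continuous.sub
  apply Continuous.sub
  · exact continuous_const
  · exact (frac_cont_rpow α hα).mul continuous_const
  · exact (continuous_const.mul Complex.continuous_ofReal).mul continuous_const

lemma fracF_cont (α γ x θ : ℝ) (hα : 0 ≤ α) (hγ : 0 ≤ γ) :
    Continuous (fun r => fracF α γ x θ r) :=
  (frac_cont_rpow γ hγ).mul ((fracE_cont α γ x θ hα).cexp)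

lemma fracG_cont (α γ x θ : ℝ) (hα : 0 ≤ α) (hγ : 0 ≤ γ) :
    Continuous (fun r => fracG α γ x θ r) :=
  (frac_cont_rpow (γ+1) (by linarith)).mul ((fracE_cont α γ x θ hα).cexp)

lemma fracD_cont (α γ x θ : ℝ) (hα : 0 ≤ α) (hγ : 0 ≤ γ) :
    Continuous (fun r => fracD α γ x θ r) := by
  unfold fracD
  apply (fracF_cont α γ x θ hα hγ).mul
  apply Continuous.sub
  apply Continuous.add
  · exact continuous_const
  · exact (continuous_const.mul (frac_cont_rpow α hα)).mul continuous_const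
  · exact (continuous_const.mul Complex.continuous_ofReal).mul continuous_const

lemma fracD_norm_le {α γ x θ : ℝ} (hα : 1 < α) (hγ : 0 < γ) (hx : 0 ≤ x)
    (hθ : |α*θ| ≤ 3*Real.pi/8) {r : ℝ} (hr : 0 < r) :
    ‖fracD α γ x θ r‖ ≤ fracM α x *
      (((γ+1) * r^γ + α * r^(γ+α) + x * r^(γ+1)) * Real.exp (-(fracC3/2) * r^α)) := by
  rw [fracD, norm_mul]
  have hb : ‖-(Complex.I*((γ:ℂ)+1)) + Complex.I*α*((r^α : ℝ):ℂ)*Complex.exp (-(Complex.I*α*θ))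
      - (x:ℂ)*r*Complex.exp (-(Complex.I*θ))‖ ≤ (γ+1) + α * r^α + x * r := by
    refine le_trans (norm_sub_le _ _) ?_
    have h1 : ‖-(Complex.I*((γ:ℂ)+1)) + Complex.I*α*((r^α : ℝ):ℂ)*Complex.exp (-(Complex.I*α*θ))‖
        ≤ (γ+1) + α * r^α := by
      refine le_trans (norm_add_le _ _) ?_
      have e1 : ‖-(Complex.I*((γ:ℂ)+1))‖ = γ+1 := by
        rw [norm_neg, norm_mul, Complex.norm_I, one_mul]
        rw [show ((γ:ℂ)+1) = ((γ+1 : ℝ):ℂ) by push_cast; ring, Complex.norm_real, Real.norm_eq_abs]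
        exact _root_.abs_of_nonneg (by linarith)
      have e2 : ‖Complex.I*α*((r^α : ℝ):ℂ)*Complex.exp (-(Complex.I*α*θ))‖ = α * r^α := by
        rw [norm_mul, norm_mul, norm_mul]
        simp [Complex.norm_exp, _root_.abs_of_nonneg (le_of_lt (lt_trans one_pos hα)),
          _root_.abs_of_nonneg (Real.rpow_nonneg hr.le α)]
      rw [e1, e2]
    have e3 : ‖(x:ℂ)*r*Complex.exp (-(Complex.I*θ))‖ = x * r := by
      rw [norm_mul, norm_mul]
      simp [Complex.norm_exp, _root_.abs_of_nonneg hx, _root_.abs_of_nonneg hr.le]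
    rw [e3]
    linarith
  have hF := frac_norm_aux (α := α) (γ := γ) (x := x) (θ := θ) γ hα hx hθ hr.le
  unfold fracF at hF ⊢
  calc ‖((r^γ:ℝ):ℂ) * Complex.exp (fracE α γ x θ r)‖ * ‖_‖
      ≤ (fracM α x * (r^γ * Real.exp (-(fracC3/2) * r^α))) * ((γ+1) + α * r^α + x * r) := by
        apply mul_le_mul hF hb (norm_nonneg _)
        exact mul_nonneg (by rw [fracM]; positivity) (by positivity)
    _ = fracM α x * ((r^γ*(γ+1) + α * (r^γ*r^α) + x * (r^γ*r)) * Real.exp (-(fracC3/2) * r^α)) := by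
        ring
    _ = fracM α x *
      (((γ+1) * r^γ + α * r^(γ+α) + x * r^(γ+1)) * Real.exp (-(fracC3/2) * r^α)) := by
        rw [← Real.rpow_add hr, ← Real.rpow_add_one hr.ne' γ]
        ring_nf

noncomputable def fracBound (α γ x : ℝ) (r : ℝ) : ℝ :=
  fracM α x * (((γ+1) * r^γ + α * r^(γ+α) + x * r^(γ+1)) * Real.exp (-(fracC3/2) * r^α))

lemma fracF_integrableOn {α γ x θ : ℝ} (hα : 1 < α) (hγ : 0 < γ) (hx : 0 ≤ x)
    (hθ : |α*θ| ≤ 3*Real.pi/8) :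
    IntegrableOn (fun r => fracF α γ x θ r) (Ioi 0) := by
  have hc : (0:ℝ) < fracC3/2 := half_pos fracC3_pos
  apply Integrable.mono' (g := fun r => fracM α x * (r^γ * Real.exp (-(fracC3/2) * r^α)))
  · exact (integrableOn_rpow_mul_exp_neg_mul_rpow (by linarith : (-1:ℝ) < γ) (lt_trans one_pos hα) hc).const_mul _
  · exact ((fracF_cont α γ x θ (by linarith) hγ.le).aestronglyMeasurable).restrict
  · exact (ae_restrict_iff' measurableSet_Ioi).mpr
      (ae_of_all _ fun r hr => frac_norm_aux γ hα hx hθ (le_of_lt hr))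

lemma fracBound_integrableOn {α γ x : ℝ} (hα : 1 < α) (hγ : 0 < γ) (hx : 0 ≤ x) :
    IntegrableOn (fracBound α γ x) (Ioi 0) := by
  have hc : (0:ℝ) < fracC3/2 := half_pos fracC3_pos
  have h1 := integrableOn_rpow_mul_exp_neg_mul_rpow (by linarith : (-1:ℝ) < γ) (lt_trans one_pos hα) hc
  have h2 := integrableOn_rpow_mul_exp_neg_mul_rpow (by linarith : (-1:ℝ) < γ+α) (lt_trans one_pos hα) hc
  have h3 := integrableOn_rpow_mul_exp_neg_mul_rpow (by linarith : (-1:ℝ) < γ+1) (lt_trans one_pos hα) hc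
  have heq : fracBound α γ x = fun r =>
      (fracM α x * (γ+1)) * (r^γ * Real.exp (-(fracC3/2) * r^α))
      + (fracM α x * α) * (r^(γ+α) * Real.exp (-(fracC3/2) * r^α))
      + (fracM α x * x) * (r^(γ+1) * Real.exp (-(fracC3/2) * r^α)) := by
    funext r; rw [fracBound]; ring
  rw [heq]
  exact ((h1.const_mul _).add (h2.const_mul _)).add (h3.const_mul _)

lemma frac_key {α γ x : ℝ} (hα : 1 < α) (hγ : 0 < γ) (hx : 0 < x) :
    ‖∫ r in Ioi (0:ℝ), fracF α γ x 0 r‖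
      ≤ (1/(x * Real.sin (Real.pi/(4*α))))^(γ+1) * Real.Gamma (γ+1) := by
  have hα0 : (0:ℝ) < α := lt_trans one_pos hα
  have hπ := Real.pi_pos
  set θ1 := Real.pi/(4*α) with hθ1
  have hθ1pos : 0 < θ1 := by rw [hθ1]; positivity
  have hs : 0 < Real.sin θ1 :=
    Real.sin_pos_of_pos_of_lt_pi hθ1pos (by rw [hθ1]; exact div_lt_self hπ (by linarith))
  set δ := Real.pi/(8*α) with hδdef
  have hδ : 0 < δ := by rw [hδdef]; positivity
  have hang : ∀ θ0 ∈ Icc (0:ℝ) θ1, ∀ θ ∈ Metric.ball θ0 δ, |α*θ| ≤ 3*Real.pi/8 := by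
    intro θ0 h0 θ hb
    rw [Metric.mem_ball, Real.dist_eq] at hb
    have h01 : 0 ≤ θ0 := h0.1
    have h02 : θ0 ≤ θ1 := h0.2
    have habs : |θ| ≤ θ1 + δ := by
      have h3 : |θ| ≤ |θ0| + |θ - θ0| := by
        calc |θ| = |θ0 + (θ - θ0)| := by ring_nf
        _ ≤ |θ0| + |θ - θ0| := abs_add_le _ _
      rw [_root_.abs_of_nonneg h01] at h3
      linarith
    rw [abs_mul, abs_of_pos hα0]
    calc α * |θ| ≤ α * (θ1 + δ) := mul_le_mul_of_nonneg_left habs hα0.le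
    _ = 3*Real.pi/8 := by rw [hθ1, hδdef]; field_simp; ring
  set H := fun θ => ∫ r in Ioi (0:ℝ), fracF α γ x θ r with hHdef
  have hH : ∀ θ0 ∈ Icc (0:ℝ) θ1, HasDerivAt H 0 θ0 := by
    intro θ0 h0
    have hθ0ang : |α*θ0| ≤ 3*Real.pi/8 := hang θ0 h0 θ0 (Metric.mem_ball_self hδ)
    have hder := hasDerivAt_integral_of_dominated_loc_of_deriv_le
      (F := fun θ r => fracF α γ x θ r) (F' := fun θ r => fracD α γ x θ r)
      (bound := fracBound α γ x) (μ := volume.restrict (Ioi 0)) (x₀ := θ0) (Metric.ball_mem_nhds θ0 hδ)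
      (Filter.Eventually.of_forall fun θ =>
        ((fracF_cont α γ x θ hα0.le hγ.le).aestronglyMeasurable).restrict)
      (fracF_integrableOn hα hγ hx.le hθ0ang)
      (((fracD_cont α γ x θ0 hα0.le hγ.le).aestronglyMeasurable).restrict)
      ((ae_restrict_iff' measurableSet_Ioi).mpr
        (ae_of_all _ fun r hr θ hθb => fracD_norm_le hα hγ hx.le (hang θ0 h0 θ hθb) hr))
      (fracBound_integrableOn hα hγ hx.le)
      (ae_of_all _ fun r θ _ => hasDerivAt_fracF_theta α γ x r θ)
    obtain ⟨hintD, hderH⟩ := hder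
    have hFTC : ∫ r in Ioi (0:ℝ), Complex.I * fracD α γ x θ0 r = 0 - fracG α γ x θ0 0 := by
      apply integral_Ioi_of_hasDerivAt_of_tendsto
      · exact ((fracG_cont α γ x θ0 hα0.le hγ.le).continuousAt).continuousWithinAt
      · exact fun r hr => hasDerivAt_fracG_r α γ x θ0 r hr hα0 hγ
      · exact hintD.const_mul Complex.I
      · apply squeeze_zero_norm'
          (a := fun r => fracM α x * (r^(γ+1) * Real.exp (-(fracC3/2) * r^α)))
        · filter_upwards [eventually_gt_atTop 0] with r hr
          simpa [fracG] using frac_norm_aux (θ := θ0) (γ+1) hα hx.le hθ0ang hr.le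
        · have hc2 : (0:ℝ) < fracC3/2 := half_pos fracC3_pos
          have t1 := tendsto_rpow_mul_exp_neg_mul_atTop_nhds_zero ((γ+1)/α) (fracC3/2) hc2
          have t2 := t1.comp (tendsto_rpow_atTop hα0)
          have t3 : Tendsto (fun r : ℝ => r^(γ+1) * Real.exp (-(fracC3/2) * r^α)) atTop (𝓝 0) := by
            apply t2.congr'
            filter_upwards [eventually_ge_atTop 0] with r hr
            simp only [Function.comp_apply]
            rw [← Real.rpow_mul hr, mul_comm α ((γ+1)/α), div_mul_cancel₀ _ hα0.ne']
          simpa using t3.const_mul (fracM α x)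
    have hG0 : fracG α γ x θ0 0 = 0 := by
      rw [fracG, Real.zero_rpow (by linarith : γ+1 ≠ 0)]
      simp
    have hzero : ∫ r in Ioi (0:ℝ), fracD α γ x θ0 r = 0 := by
      have h1 : Complex.I * ∫ r in Ioi (0:ℝ), fracD α γ x θ0 r = 0 := by
        rw [← integral_const_mul, hFTC, hG0, sub_zero]
      rcases mul_eq_zero.1 h1 with h | h
      · exact absurd h Complex.I_ne_zero
      · exact h
    rw [hzero] at hderH
    exact hderH
  have hconst := constant_of_has_deriv_right_zero (f := H) (a := 0) (b := θ1)
    (fun θ0 h0 => (hH θ0 h0).continuousAt.continuousWithinAt)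
    (fun θ0 h0 => (hH θ0 (Ico_subset_Icc_self h0)).hasDerivWithinAt)
  have hH01 : H θ1 = H 0 := hconst θ1 (right_mem_Icc.mpr hθ1pos.le)
  have hcosθ1 : α * θ1 = Real.pi/4 := by rw [hθ1]; field_simp
  have hbound : ‖H θ1‖ ≤ ∫ r in Ioi (0:ℝ), r^γ * Real.exp (-(x*Real.sin θ1) * r) := by
    apply norm_integral_le_of_norm_le
    · have := integrableOn_rpow_mul_exp_neg_mul_rpow (show (-1:ℝ) < γ by linarith)
        one_pos (mul_pos hx hs)
      simpa [Real.rpow_one, IntegrableOn] using this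
    · refine (ae_restrict_iff' measurableSet_Ioi).mpr (ae_of_all _ fun r hr => ?_)
      rw [fracF_norm α γ x θ1 r (le_of_lt hr)]
      apply mul_le_mul_of_nonneg_left _ (Real.rpow_nonneg (le_of_lt hr) γ)
      apply Real.exp_le_exp.2
      have hc4 : 0 ≤ r^α * Real.cos (α*θ1) := by
        rw [hcosθ1, Real.cos_pi_div_four]
        have : (0:ℝ) ≤ Real.sqrt 2 / 2 := by positivity
        exact mul_nonneg (Real.rpow_nonneg (le_of_lt hr) α) this
      nlinarith [hc4]
  have hval : ∫ r in Ioi (0:ℝ), r^γ * Real.exp (-(x*Real.sin θ1) * r)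
      = (1/(x*Real.sin θ1))^(γ+1) * Real.Gamma (γ+1) := by
    have h := integral_rpow_mul_exp_neg_mul_Ioi (show (0:ℝ) < γ+1 by linarith) (mul_pos hx hs)
    simp only [add_sub_cancel_right] at h
    rw [← h]
    refine setIntegral_congr_fun measurableSet_Ioi (fun r _ => ?_)
    rw [neg_mul]
  calc ‖∫ r in Ioi (0:ℝ), fracF α γ x 0 r‖ = ‖H 0‖ := rfl
  _ = ‖H θ1‖ := by rw [hH01]
  _ ≤ (1/(x*Real.sin θ1))^(γ+1) * Real.Gamma (γ+1) := hval ▸ hbound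

lemma frac_re_term (α x ξ : ℝ) :
    (Complex.exp (-(Complex.I * (ξ:ℂ) * (x:ℂ)) - ((|ξ|^α : ℝ) : ℂ))).re
      = Real.exp (-(|ξ|^α)) * Real.cos (x*ξ) := by
  rw [Complex.exp_re]
  have h1 : (-(Complex.I * (ξ:ℂ) * (x:ℂ)) - ((|ξ|^α : ℝ) : ℂ)).re = -(|ξ|^α) := by simp
  have h2 : (-(Complex.I * (ξ:ℂ) * (x:ℂ)) - ((|ξ|^α : ℝ) : ℂ)).im = -(ξ*x) := by simp
  rw [h1, h2, Real.cos_neg, mul_comm ξ x]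

lemma fracF0_re (α γ x r : ℝ) :
    (fracF α γ x 0 r).re = r^γ * (Real.exp (-(r^α)) * Real.cos (x*r)) := by
  have hE : fracE α γ x 0 r = -((r^α : ℝ):ℂ) - Complex.I*x*r := by
    rw [fracE]; push_cast; simp
  rw [fracF, hE]
  have h1 : (-((r^α : ℝ):ℂ) - Complex.I*x*r).re = -(r^α) := by simp
  have h2 : (-((r^α : ℝ):ℂ) - Complex.I*x*r).im = -(x*r) := by simp
  simp only [Complex.mul_re, Complex.ofReal_re, Complex.ofReal_im, Complex.exp_re,
    Complex.exp_im, h1, h2, Real.cos_neg, Real.sin_neg]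
  ring

lemma kernel_eq (α γ x : ℝ) :
    (∫ ξ:ℝ, |ξ|^γ * (Complex.exp (-(Complex.I * (ξ:ℂ) * (x:ℂ)) - ((|ξ|^α : ℝ) : ℂ))).re)
      = 2 * ∫ r in Ioi (0:ℝ), (fracF α γ x 0 r).re := by
  set g1 : ℝ → ℝ := fun t => t^γ * (Real.exp (-(t^α)) * Real.cos (x*t)) with hg1
  have hfun : (fun ξ:ℝ => |ξ|^γ * (Complex.exp (-(Complex.I * (ξ:ℂ) * (x:ℂ)) - ((|ξ|^α : ℝ) : ℂ))).re)
      = fun ξ:ℝ => g1 |ξ| := by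
    funext ξ
    rw [frac_re_term]
    have hg1v : ∀ t, g1 t = t^γ * (Real.exp (-(t^α)) * Real.cos (x*t)) := fun t => rfl
    rcases abs_cases ξ with ⟨h, _⟩ | ⟨h, _⟩
    · rw [hg1v, h]
    · rw [hg1v, h]
      have hc : Real.cos (x * -ξ) = Real.cos (x * ξ) := by
        rw [show x * -ξ = -(x*ξ) by ring, Real.cos_neg]
      rw [hc]
  rw [hfun, integral_comp_abs (f := g1)]
  congr 1
  refine setIntegral_congr_fun measurableSet_Ioi (fun r _ => ?_)
  rw [fracF0_re]

lemma frac_trivial {α γ : ℝ} (hα : 1 < α) (hγ : 0 < γ) (x : ℝ) :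
    |∫ ξ:ℝ, |ξ|^γ * (Complex.exp (-(Complex.I * (ξ:ℂ) * (x:ℂ)) - ((|ξ|^α : ℝ) : ℂ))).re|
      ≤ 2 * ((1/α) * Real.Gamma ((γ+1)/α)) := by
  have hα0 : (0:ℝ) < α := lt_trans one_pos hα
  set g0 : ℝ → ℝ := fun t => t^γ * Real.exp (-(t^α)) with hg0
  have hIoi : IntegrableOn (fun ξ => g0 |ξ|) (Ioi 0) := by
    apply (integrableOn_rpow_mul_exp_neg_rpow (by linarith : (-1:ℝ) < γ) (lt_trans one_pos hα)).congr_fun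
      (fun ξ hξ => ?_) measurableSet_Ioi
    rw [hg0]
    simp only [abs_of_pos (show (0:ℝ) < ξ from hξ)]
  have hIic : IntegrableOn (fun ξ => g0 |ξ|) (Iic 0) := by
    rw [← Measure.map_neg_eq_self (volume : Measure ℝ)]
    have m : MeasurableEmbedding fun x : ℝ => -x := (Homeomorph.neg ℝ).measurableEmbedding
    rw [m.integrableOn_map_iff]
    simp_rw [Function.comp_def, abs_neg, neg_preimage, neg_Iic, neg_zero]
    exact (integrableOn_Ici_iff_integrableOn_Ioi (by finiteness)).mpr hIoi
  have htot : Integrable (fun ξ => g0 |ξ|) := by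
    rw [← integrableOn_univ, ← Iic_union_Ioi (a := (0:ℝ))]
    exact hIic.union hIoi
  have hle : ∀ ξ : ℝ, ‖|ξ|^γ * (Complex.exp (-(Complex.I * (ξ:ℂ) * (x:ℂ)) - ((|ξ|^α : ℝ) : ℂ))).re‖
      ≤ g0 |ξ| := by
    intro ξ
    rw [frac_re_term]
    have hg0v : g0 |ξ| = |ξ|^γ * Real.exp (-(|ξ|^α)) := rfl
    rw [hg0v]
    have h1 : (0:ℝ) ≤ |ξ|^γ := Real.rpow_nonneg (abs_nonneg ξ) γ
    have h2 : (0:ℝ) < Real.exp (-(|ξ|^α)) := Real.exp_pos _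
    have h3 : |Real.cos (x*ξ)| ≤ 1 := Real.abs_cos_le_one _
    rw [Real.norm_eq_abs, abs_mul, abs_mul, _root_.abs_of_nonneg h1,
      _root_.abs_of_nonneg h2.le]
    exact mul_le_mul_of_nonneg_left (mul_le_of_le_one_right h2.le h3) h1
  have := norm_integral_le_of_norm_le htot (ae_of_all _ hle)
  rw [Real.norm_eq_abs] at this
  refine le_trans this ?_
  rw [integral_comp_abs (f := g0)]
  have : ∫ r in Ioi (0:ℝ), g0 r = (1/α) * Real.Gamma ((γ+1)/α) :=
    integral_rpow_mul_exp_neg_rpow hα0 (by linarith)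
  rw [this]

lemma frac_main {α γ x : ℝ} (hα : 1 < α) (hγ : 0 < γ) (hx : 0 < x) :
    |∫ ξ:ℝ, |ξ|^γ * (Complex.exp (-(Complex.I * (ξ:ℂ) * (x:ℂ)) - ((|ξ|^α : ℝ) : ℂ))).re|
      ≤ 2 * ((1/(x*Real.sin (Real.pi/(4*α))))^(γ+1) * Real.Gamma (γ+1)) := by
  rw [kernel_eq]
  have hInt : IntegrableOn (fun r => fracF α γ x 0 r) (Ioi 0) :=
    fracF_integrableOn hα hγ hx.le (by rw [mul_zero, abs_zero]; positivity)
  have hre : ∫ r in Ioi (0:ℝ), (fracF α γ x 0 r).re = (∫ r in Ioi (0:ℝ), fracF α γ x 0 r).re := by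
    have := integral_re (μ := volume.restrict (Ioi 0)) hInt
    simpa using this
  rw [abs_mul, hre]
  have h1 : |(∫ r in Ioi (0:ℝ), fracF α γ x 0 r).re| ≤ ‖∫ r in Ioi (0:ℝ), fracF α γ x 0 r‖ :=
    Complex.abs_re_le_norm _
  have h2 := frac_key hα hγ hx
  rw [show |(2:ℝ)| = 2 from abs_two]
  calc 2 * |(∫ r in Ioi (0:ℝ), fracF α γ x 0 r).re|
      ≤ 2 * ‖∫ r in Ioi (0:ℝ), fracF α γ x 0 r‖ := by linarith
    _ ≤ 2 * ((1/(x*Real.sin (Real.pi/(4*α))))^(γ+1) * Real.Gamma (γ+1)) := by linarith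

lemma kernel_abs (α γ x : ℝ) : fracLapGKernel α γ x = fracLapGKernel α γ |x| := by
  unfold fracLapGKernel
  congr 1
  congr 1
  funext ξ
  rw [frac_re_term, frac_re_term]
  rcases abs_cases x with ⟨h, _⟩ | ⟨h, _⟩
  · rw [h]
  · rw [h, show -x*ξ = -(x*ξ) by ring, Real.cos_neg]

/-- Polynomial decay of the fractional Laplacian of `G`:
for `α ∈ (1,2]` and `γ > 0` there is `C = C(α,γ) > 0` with
`|(−Δ)^{γ/2}G(x)| ≤ C / (1 + |x|^{1+γ})` for all `x`. -/
theorem fracLap_GKernel_decay (α γ : ℝ) (hα : 1 < α) (hα' : α ≤ 2) (hγ : 0 < γ) :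
    ∃ C : ℝ, 0 < C ∧
      ∀ x : ℝ, |fracLapGKernel α γ x| ≤ C / (1 + |x| ^ (1 + γ)) := by
  have hα0 : (0:ℝ) < α := lt_trans one_pos hα
  have hπ := Real.pi_pos
  set s := Real.sin (Real.pi/(4*α)) with hsdef
  have hs : 0 < s := Real.sin_pos_of_pos_of_lt_pi (by positivity)
    (div_lt_self hπ (by linarith))
  set K := 1/(2*Real.pi) with hKdef
  have hKpos : 0 < K := by rw [hKdef]; positivity
  set A := 2 * ((1/α) * Real.Gamma ((γ+1)/α)) with hAdef
  have hApos : 0 < A := by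
    have := Real.Gamma_pos_of_pos (show 0 < (γ+1)/α by positivity)
    rw [hAdef]; positivity
  set B := 2 * ((1/s)^(γ+1) * Real.Gamma (γ+1)) with hBdef
  have hBpos : 0 < B := by
    have := Real.Gamma_pos_of_pos (show (0:ℝ) < γ+1 by linarith)
    rw [hBdef]; positivity
  refine ⟨2*(K*A) + 2*(K*B) + 1, by positivity, fun x => ?_⟩
  have hKA : 0 < K*A := mul_pos hKpos hApos
  have hKB : 0 < K*B := mul_pos hKpos hBpos
  have hdenpos : (0:ℝ) < 1 + |x| ^ (1+γ) := by positivity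
  have habsK : |1/(2*Real.pi)| = K := by rw [hKdef]; exact abs_of_pos (by positivity)
  rcases le_or_gt |x| 1 with hx1 | hx1
  · -- |x| ≤ 1 : trivial bound
    have h1 := frac_trivial hα hγ x
    have hker : |fracLapGKernel α γ x| ≤ K * A := by
      unfold fracLapGKernel
      rw [abs_mul, habsK, hAdef]
      exact mul_le_mul_of_nonneg_left h1 hKpos.le
    have hd2 : 1 + |x| ^ (1+γ) ≤ 2 := by
      have := Real.rpow_le_one (abs_nonneg x) hx1 (by linarith : (0:ℝ) ≤ 1+γ)
      linarith
    calc |fracLapGKernel α γ x| ≤ K*A := hker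
      _ ≤ (2*(K*A) + 2*(K*B) + 1)/2 := by linarith
      _ ≤ (2*(K*A) + 2*(K*B) + 1)/(1 + |x| ^ (1+γ)) := by
          gcongr
  · -- |x| > 1
    have hxpos : (0:ℝ) < |x| := lt_trans one_pos hx1
    have hmain := frac_main hα hγ hxpos
    rw [← hsdef] at hmain
    have hsplit : (1/(|x| * s))^(γ+1) = (1/s)^(γ+1) * (|x| ^ (γ+1))⁻¹ := by
      rw [show (1:ℝ)/(|x| * s) = (1/s) * |x|⁻¹ from by rw [one_div, one_div, mul_inv]; ring,
        Real.mul_rpow (by positivity) (by positivity), Real.inv_rpow (abs_nonneg x)]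
    have hker : |fracLapGKernel α γ x| ≤ (K*B) * (|x| ^ (γ+1))⁻¹ := by
      rw [kernel_abs]
      unfold fracLapGKernel
      rw [abs_mul, habsK]
      refine le_trans (mul_le_mul_of_nonneg_left hmain hKpos.le) (le_of_eq ?_)
      rw [hsplit, hBdef]; ring
    have hpow1 : (1:ℝ) ≤ |x| ^ (1+γ) := by
      calc (1:ℝ) = 1^(1+γ) := (Real.one_rpow _).symm
      _ ≤ |x| ^ (1+γ) := Real.rpow_le_rpow zero_le_one hx1.le (by positivity)
    have hco : |x| ^ (γ+1) = |x| ^ (1+γ) := by rw [add_comm]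
    refine le_trans hker ?_
    rw [hco, ← div_eq_mul_inv, div_le_div_iff₀ (by positivity) hdenpos]
    nlinarith [mul_le_mul_of_nonneg_left hpow1 hKB.le]
end

section
/- Let α ∈ (1,2], γ > 0 and x > 0. Then (contour rotation identity obtained from Cauchy's theorem applied to z ↦ z^γ exp(−izx − z^α) on a circular sector of opening angle π/(2α)): ∫₀^∞ ξ^γ exp(−iξx − ξ^α) dξ = e^{−i(γ+1)π/(2α)} ∫₀^∞ λ^γ exp(−λx·e^{i(α−1)π/(2α)} − λ^α·e^{−iπ/2}) dλ, where both improper complex integrals converge absolutely (note cos((α−1)π/(2α)) > 0 for α ∈ (1,2]). -/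
open MeasureTheory Set Filter Topology

namespace ContourAux4

noncomputable def G (α γ x : ℝ) (θ l : ℝ) : ℂ :=
  ↑(l ^ γ) * Complex.exp (Complex.I * (↑γ + 1) * ↑θ
    - Complex.I * ↑l * ↑x * Complex.exp (Complex.I * ↑θ)
    - ↑(l ^ α) * Complex.exp (Complex.I * ↑α * ↑θ))

lemma exp_I_mul (t : ℝ) :
    Complex.exp (Complex.I * t) = ↑(Real.cos t) + ↑(Real.sin t) * Complex.I := by
  rw [mul_comm, Complex.exp_mul_I, Complex.ofReal_cos, Complex.ofReal_sin]

lemma norm_exp_I_mul (t : ℝ) : ‖Complex.exp (Complex.I * t)‖ = 1 := by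
  rw [mul_comm]; exact Complex.norm_exp_ofReal_mul_I t

lemma re_arg (α γ x θ l : ℝ) :
    (Complex.I * (↑γ + 1) * ↑θ - Complex.I * ↑l * ↑x * Complex.exp (Complex.I * ↑θ)
      - ↑(l ^ α) * Complex.exp (Complex.I * ↑α * ↑θ)).re
      = l * x * Real.sin θ - l ^ α * Real.cos (α * θ) := by
  have h2 : (Complex.I * ↑α * ↑θ : ℂ) = Complex.I * ↑(α * θ) := by push_cast; ring
  rw [h2, exp_I_mul, exp_I_mul]
  simp [Complex.add_re, Complex.sub_re, Complex.mul_re, Complex.sin_ofReal_re,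
    Complex.cos_ofReal_re, Complex.sin_ofReal_im, Complex.cos_ofReal_im, ← Complex.ofReal_mul]

lemma norm_G (α γ x θ : ℝ) {l : ℝ} (hl : 0 ≤ l) :
    ‖G α γ x θ l‖ = l ^ γ * Real.exp (l * x * Real.sin θ - l ^ α * Real.cos (α * θ)) := by
  rw [G, norm_mul, Complex.norm_exp, re_arg,
    Complex.norm_real, Real.norm_of_nonneg (Real.rpow_nonneg hl _)]

section Bounds

variable {α γ x : ℝ} (hα : 1 < α) (hα' : α ≤ 2) (hγ : 0 < γ) (hx : 0 < x)

/-- the rotation angle -/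
noncomputable def bb (α : ℝ) : ℝ := Real.pi / (2 * α)

noncomputable def smallB (α γ x : ℝ) (l : ℝ) : ℝ :=
  l ^ γ * (Real.exp (-(x * Real.sin (bb α / 2)) * l)
    + Real.exp (-(Real.cos (Real.pi / 4)) * l ^ α))

noncomputable def bigB (α γ x : ℝ) (l : ℝ) : ℝ :=
  ((γ + 1) + x * l + α * l ^ α) * smallB α γ x l

include hα in
lemma b_pos : 0 < bb α := by
  have := Real.pi_pos
  rw [bb]; positivity

include hα in
lemma ab_eq : α * bb α = Real.pi / 2 := by
  rw [bb]; field_simp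

include hα in
lemma b_lt : bb α < Real.pi / 2 := by
  have hπ := Real.pi_pos
  rw [bb, div_lt_div_iff₀ (by linarith) (by norm_num)]
  nlinarith

include hα hx in
lemma s0_pos : 0 < x * Real.sin (bb α / 2) := by
  have h1 := b_pos hα
  have h2 := b_lt hα
  have hπ := Real.pi_pos
  exact mul_pos hx (Real.sin_pos_of_pos_of_lt_pi (by linarith) (by linarith))

lemma c0_pos : 0 < Real.cos (Real.pi / 4) := by
  have hπ := Real.pi_pos
  exact Real.cos_pos_of_mem_Ioo ⟨by linarith, by linarith⟩

include hα hγ hx in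
lemma norm_G_le {θ l : ℝ} (hθ : θ ∈ Icc (-(bb α)) 0) (hl : 0 ≤ l) :
    ‖G α γ x θ l‖ ≤ smallB α γ x l := by
  have hπ := Real.pi_pos
  have hb0 := b_pos hα
  have hbπ := b_lt hα
  have hab := ab_eq hα
  have hlγ : (0:ℝ) ≤ l ^ γ := Real.rpow_nonneg hl _
  have hlα : (0:ℝ) ≤ l ^ α := Real.rpow_nonneg hl _
  rw [norm_G _ _ _ _ hl, smallB]
  rcases le_or_gt θ (-(bb α) / 2) with hc | hc
  · have hsin : Real.sin θ ≤ -Real.sin (bb α / 2) := by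
      have := Real.strictMonoOn_sin.monotoneOn
        (a := θ) (b := -(bb α / 2))
        (Set.mem_Icc.2 ⟨by linarith [hθ.1], by linarith [hθ.2]⟩)
        (Set.mem_Icc.2 ⟨by linarith, by linarith⟩) (by linarith)
      rwa [Real.sin_neg] at this
    have hcos : 0 ≤ Real.cos (α * θ) := by
      apply Real.cos_nonneg_of_mem_Icc
      constructor
      · have : α * (-(bb α)) ≤ α * θ := by
          apply mul_le_mul_of_nonneg_left hθ.1 (by linarith)
        rw [mul_neg, hab] at this; linarith
      · nlinarith [hθ.2]
    have h1 : l * x * Real.sin θ - l ^ α * Real.cos (α * θ)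
        ≤ -(x * Real.sin (bb α / 2)) * l := by
      nlinarith [mul_le_mul_of_nonneg_left hsin (mul_nonneg hl hx.le), mul_nonneg hlα hcos]
    calc l ^ γ * Real.exp (l * x * Real.sin θ - l ^ α * Real.cos (α * θ))
        ≤ l ^ γ * Real.exp (-(x * Real.sin (bb α / 2)) * l) := by
          apply mul_le_mul_of_nonneg_left (Real.exp_le_exp.2 h1) hlγ
      _ ≤ _ := by
          apply mul_le_mul_of_nonneg_left (le_add_of_nonneg_right (Real.exp_nonneg _)) hlγ
  · have hsin : Real.sin θ ≤ 0 :=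
      Real.sin_nonpos_of_nonpos_of_neg_pi_le (hθ.2) (by linarith [hθ.1])
    have hcos : Real.cos (Real.pi / 4) ≤ Real.cos (α * θ) := by
      rw [← Real.cos_neg (α * θ)]
      apply Real.cos_le_cos_of_nonneg_of_le_pi
      · nlinarith [hθ.2]
      · linarith
      · nlinarith
    have h1 : l * x * Real.sin θ - l ^ α * Real.cos (α * θ)
        ≤ -(Real.cos (Real.pi / 4)) * l ^ α := by
      nlinarith [mul_nonpos_of_nonneg_of_nonpos (mul_nonneg hl hx.le) hsin,
        mul_le_mul_of_nonneg_left hcos hlα]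
    calc l ^ γ * Real.exp (l * x * Real.sin θ - l ^ α * Real.cos (α * θ))
        ≤ l ^ γ * Real.exp (-(Real.cos (Real.pi / 4)) * l ^ α) := by
          apply mul_le_mul_of_nonneg_left (Real.exp_le_exp.2 h1) hlγ
      _ ≤ _ := by
          apply mul_le_mul_of_nonneg_left (le_add_of_nonneg_left (Real.exp_nonneg _)) hlγ


noncomputable def D (α γ x : ℝ) (θ l : ℝ) : ℂ :=
  Complex.I * (↑γ + 1) - Complex.I * ↑l * ↑x * (Complex.exp (Complex.I * ↑θ) * Complex.I)
    - ↑(l ^ α) * (Complex.exp (Complex.I * ↑α * ↑θ) * (Complex.I * ↑α))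

noncomputable def G' (α γ x : ℝ) (θ l : ℝ) : ℂ := G α γ x θ l * D α γ x θ l

include hα hx in
lemma integ1 (s : ℝ) (hs : -1 < s) :
    IntegrableOn (fun l : ℝ => l ^ s * Real.exp (-(x * Real.sin (bb α / 2)) * l)) (Ioi 0) := by
  have := integrableOn_rpow_mul_exp_neg_mul_rpow (p := 1) (s := s) hs zero_lt_one (s0_pos hα hx)
  simpa [Real.rpow_one] using this

include hα in
lemma integ2 (s : ℝ) (hs : -1 < s) :
    IntegrableOn (fun l : ℝ => l ^ s * Real.exp (-(Real.cos (Real.pi / 4)) * l ^ α)) (Ioi 0) :=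
  integrableOn_rpow_mul_exp_neg_mul_rpow hs (by linarith) c0_pos

include hα hγ hx in
lemma integrable_smallB : IntegrableOn (smallB α γ x) (Ioi 0) := by
  have h := (integ1 hα hx γ (by linarith)).add (integ2 hα γ (by linarith))
  refine IntegrableOn.congr_fun h (fun l _ => ?_) measurableSet_Ioi
  simp only [smallB, Pi.add_apply]
  ring

include hα hγ hx in
lemma integrable_bigB : IntegrableOn (bigB α γ x) (Ioi 0) := by
  have key : IntegrableOn (fun l : ℝ =>
      ((γ+1) * (l ^ γ * Real.exp (-(x * Real.sin (bb α / 2)) * l))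
        + x * (l ^ (γ+1) * Real.exp (-(x * Real.sin (bb α / 2)) * l))
        + α * (l ^ (γ+α) * Real.exp (-(x * Real.sin (bb α / 2)) * l)))
      + ((γ+1) * (l ^ γ * Real.exp (-(Real.cos (Real.pi / 4)) * l ^ α))
        + x * (l ^ (γ+1) * Real.exp (-(Real.cos (Real.pi / 4)) * l ^ α))
        + α * (l ^ (γ+α) * Real.exp (-(Real.cos (Real.pi / 4)) * l ^ α)))) (Ioi 0) := by
    refine ((((integ1 hα hx γ (by linarith)).const_mul _).add
      ((integ1 hα hx (γ+1) (by linarith)).const_mul _)).add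
      ((integ1 hα hx (γ+α) (by linarith)).const_mul _)).add
      ((((integ2 hα γ (by linarith)).const_mul _).add
      ((integ2 hα (γ+1) (by linarith)).const_mul _)).add
      ((integ2 hα (γ+α) (by linarith)).const_mul _))
  apply key.congr_fun ?_ measurableSet_Ioi
  intro l hl
  have hl' : (0:ℝ) < l := hl
  have e1 : l ^ (γ+1) = l ^ γ * l := by rw [Real.rpow_add hl', Real.rpow_one]
  have e2 : l ^ (γ+α) = l ^ γ * l ^ α := Real.rpow_add hl' _ _
  simp only [bigB, smallB]
  rw [e1, e2]; ring

include hγ hα hx in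
lemma norm_D_le (θ : ℝ) {l : ℝ} (hl : 0 ≤ l) :
    ‖D α γ x θ l‖ ≤ (γ + 1) + x * l + α * l ^ α := by
  have h2 : (Complex.I * ↑α * ↑θ : ℂ) = Complex.I * ↑(α * θ) := by push_cast; ring
  have na : ‖Complex.I * ((γ:ℂ) + 1)‖ = γ + 1 := by
    rw [norm_mul, Complex.norm_I, one_mul, show ((γ:ℂ)+1) = ((γ+1:ℝ):ℂ) by push_cast; ring,
      Complex.norm_real, Real.norm_eq_abs, abs_of_pos (by linarith)]
  have nb : ‖Complex.I * (l:ℂ) * (x:ℂ) * (Complex.exp (Complex.I * ↑θ) * Complex.I)‖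
      = x * l := by
    simp only [norm_mul, Complex.norm_I, Complex.norm_real, norm_exp_I_mul, Real.norm_eq_abs,
      abs_of_nonneg hl, abs_of_nonneg hx.le]
    ring
  have nc : ‖(↑(l ^ α) : ℂ) * (Complex.exp (Complex.I * ↑α * ↑θ) * (Complex.I * ↑α))‖
      = α * l ^ α := by
    rw [h2]
    simp only [norm_mul, Complex.norm_I, Complex.norm_real, norm_exp_I_mul, Real.norm_eq_abs,
      abs_of_nonneg hl, abs_of_nonneg (Real.rpow_nonneg hl α), abs_of_nonneg (by linarith : (0:ℝ) ≤ α)]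
    ring
  rw [D]
  calc ‖Complex.I * (↑γ + 1) - Complex.I * ↑l * ↑x * (Complex.exp (Complex.I * ↑θ) * Complex.I)
        - ↑(l ^ α) * (Complex.exp (Complex.I * ↑α * ↑θ) * (Complex.I * ↑α))‖
      ≤ ‖Complex.I * (↑γ + 1) - Complex.I * ↑l * ↑x * (Complex.exp (Complex.I * ↑θ) * Complex.I)‖
        + ‖(↑(l ^ α) : ℂ) * (Complex.exp (Complex.I * ↑α * ↑θ) * (Complex.I * ↑α))‖ :=
      norm_sub_le _ _
    _ ≤ ‖Complex.I * ((γ:ℂ) + 1)‖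
        + ‖Complex.I * (l:ℂ) * (x:ℂ) * (Complex.exp (Complex.I * ↑θ) * Complex.I)‖
        + ‖(↑(l ^ α) : ℂ) * (Complex.exp (Complex.I * ↑α * ↑θ) * (Complex.I * ↑α))‖ := by
      have := norm_sub_le (Complex.I * ((γ:ℂ) + 1))
        (Complex.I * ↑l * ↑x * (Complex.exp (Complex.I * ↑θ) * Complex.I))
      linarith
    _ = (γ + 1) + x * l + α * l ^ α := by rw [na, nb, nc]

include hα hγ hx in
lemma smallB_nonneg {l : ℝ} (hl : 0 ≤ l) : 0 ≤ smallB α γ x l := by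
  have := Real.rpow_nonneg hl γ
  rw [smallB]; positivity

include hα hγ hx in
lemma norm_G'_le {θ l : ℝ} (hθ : θ ∈ Icc (-(bb α)) 0) (hl : 0 ≤ l) :
    ‖G' α γ x θ l‖ ≤ bigB α γ x l := by
  rw [G', norm_mul, bigB, mul_comm (((γ:ℝ) + 1) + x * l + α * l ^ α) _]
  exact mul_le_mul (norm_G_le hα hγ hx hθ hl) (norm_D_le hα hγ hx θ hl) (norm_nonneg _)
    (smallB_nonneg hα hγ hx hl)

include hγ hα in
lemma cont_G_l (θ : ℝ) : Continuous (fun l => G α γ x θ l) := by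
  apply Continuous.mul
  · exact Complex.continuous_ofReal.comp (continuous_id.rpow_const fun _ => Or.inr hγ.le)
  · apply Complex.continuous_exp.comp
    refine Continuous.sub (Continuous.sub continuous_const ?_) ?_
    · exact ((continuous_const.mul Complex.continuous_ofReal).mul continuous_const).mul
        continuous_const
    · exact (Complex.continuous_ofReal.comp
        (continuous_id.rpow_const fun _ => Or.inr (by linarith))).mul continuous_const

include hγ hα in
lemma cont_G'_l (θ : ℝ) : Continuous (fun l => G' α γ x θ l) := by
  apply (cont_G_l hα hγ θ).mul
  refine Continuous.sub (Continuous.sub continuous_const ?_) ?_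
  · exact ((continuous_const.mul Complex.continuous_ofReal).mul continuous_const).mul
      continuous_const
  · exact (Complex.continuous_ofReal.comp
      (continuous_id.rpow_const fun _ => Or.inr (by linarith))).mul continuous_const

lemma cont_G_theta (l : ℝ) : Continuous (fun θ => G α γ x θ l) := by
  apply continuous_const.mul
  apply Complex.continuous_exp.comp
  refine Continuous.sub (Continuous.sub ?_ ?_) ?_
  · exact continuous_const.mul Complex.continuous_ofReal
  · exact continuous_const.mul
      (Complex.continuous_exp.comp (continuous_const.mul Complex.continuous_ofReal))
  · exact continuous_const.mul
      (Complex.continuous_exp.comp ((continuous_const.mul Complex.continuous_ofReal)))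


end Bounds

lemma hasDerivAt_theta (α γ x : ℝ) (θ l : ℝ) :
    HasDerivAt (fun θ => G α γ x θ l) (G' α γ x θ l) θ := by
  have h1 : HasDerivAt (fun w : ℂ => Complex.I * (↑γ + 1) * w
      - Complex.I * ↑l * ↑x * Complex.exp (Complex.I * w)
      - ↑(l ^ α) * Complex.exp (Complex.I * ↑α * w))
      (Complex.I * (↑γ + 1) - Complex.I * ↑l * ↑x * (Complex.exp (Complex.I * ↑θ) * Complex.I)
        - ↑(l ^ α) * (Complex.exp (Complex.I * ↑α * ↑θ) * (Complex.I * ↑α))) ↑θ := by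
    have ha : HasDerivAt (fun w : ℂ => Complex.I * (↑γ + 1) * w) (Complex.I * (↑γ + 1)) ↑θ := by
      simpa using (hasDerivAt_id (↑θ : ℂ)).const_mul (Complex.I * (↑γ + 1))
    have hb : HasDerivAt (fun w : ℂ => Complex.I * ↑l * ↑x * Complex.exp (Complex.I * w))
        (Complex.I * ↑l * ↑x * (Complex.exp (Complex.I * ↑θ) * Complex.I)) ↑θ := by
      have : HasDerivAt (fun w : ℂ => Complex.exp (Complex.I * w))
          (Complex.exp (Complex.I * ↑θ) * Complex.I) ↑θ := by
        simpa using ((hasDerivAt_id (↑θ : ℂ)).const_mul Complex.I).cexp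
      exact this.const_mul _
    have hc : HasDerivAt (fun w : ℂ => (↑(l ^ α) : ℂ) * Complex.exp (Complex.I * ↑α * w))
        ((↑(l ^ α) : ℂ) * (Complex.exp (Complex.I * ↑α * ↑θ) * (Complex.I * ↑α))) ↑θ := by
      have : HasDerivAt (fun w : ℂ => Complex.exp (Complex.I * ↑α * w))
          (Complex.exp (Complex.I * ↑α * ↑θ) * (Complex.I * ↑α)) ↑θ := by
        simpa using ((hasDerivAt_id (↑θ : ℂ)).const_mul (Complex.I * ↑α)).cexp
      exact this.const_mul _
    exact (ha.sub hb).sub hc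
  have := ((h1.comp_ofReal).cexp).const_mul ((↑(l ^ γ) : ℂ))
  refine this.congr_deriv ?_
  rw [G', G, D]
  ring

lemma hasDerivAt_l (α γ x θ : ℝ) {l : ℝ} (hl : 0 < l) :
    HasDerivAt (fun l => Complex.I * ↑l * G α γ x θ l) (G' α γ x θ l) l := by
  set e1 : ℂ := Complex.exp (Complex.I * ↑θ) with he1
  set e2 : ℂ := Complex.exp (Complex.I * ↑α * ↑θ) with he2
  set c0 : ℂ := Complex.I * (↑γ + 1) * ↑θ with hc0
  have hu : HasDerivAt (fun l : ℝ => (↑(l * l ^ γ) : ℂ))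
      (↑(1 * l ^ γ + l * (γ * l ^ (γ - 1))) : ℂ) l :=
    ((hasDerivAt_id l).mul (Real.hasDerivAt_rpow_const (Or.inl hl.ne'))).ofReal_comp
  have hb : HasDerivAt (fun l : ℝ => Complex.I * ↑l * ↑x * e1) (Complex.I * ↑x * e1) l := by
    simpa [mul_assoc] using
      (((hasDerivAt_id l).ofReal_comp).mul_const ((↑x : ℂ) * e1)).const_mul Complex.I
  have hc : HasDerivAt (fun l : ℝ => (↑(l ^ α) : ℂ) * e2) ((↑(α * l ^ (α - 1)) : ℂ) * e2) l :=
    ((Real.hasDerivAt_rpow_const (Or.inl hl.ne')).ofReal_comp).mul_const e2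
  have hA : HasDerivAt (fun l : ℝ => c0 - Complex.I * ↑l * ↑x * e1 - (↑(l ^ α) : ℂ) * e2)
      (-(Complex.I * ↑x * e1) - (↑(α * l ^ (α - 1)) : ℂ) * e2) l := by
    exact (((hasDerivAt_const l c0).sub hb).sub hc).congr_deriv (by push_cast; ring)
  have key := (hu.mul hA.cexp).const_mul Complex.I
  have hfun : (fun l : ℝ => Complex.I * ((↑(l * l ^ γ) : ℂ) *
      Complex.exp (c0 - Complex.I * ↑l * ↑x * e1 - (↑(l ^ α) : ℂ) * e2)))
      = fun l : ℝ => Complex.I * ↑l * G α γ x θ l := by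
    funext t
    rw [G, he1, he2, hc0]
    push_cast
    ring
  simp only [Pi.mul_apply] at key
  rw [hfun] at key
  refine key.congr_deriv ?_
  have hp1 : (↑(l ^ α) : ℂ) = ↑(l ^ (α - 1)) * ↑l := by
    rw [← Complex.ofReal_mul, ← Real.rpow_add_one hl.ne']; norm_num
  have hp2 : (↑(l ^ γ) : ℂ) = ↑(l ^ (γ - 1)) * ↑l := by
    rw [← Complex.ofReal_mul, ← Real.rpow_add_one hl.ne']; norm_num
  rw [G', G, D]
  push_cast
  rw [hp1, hp2]
  ring

section Main

variable {α γ x : ℝ} (hα : 1 < α) (hα' : α ≤ 2) (hγ : 0 < γ) (hx : 0 < x)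

include hα hγ hx in
lemma integrable_G {θ : ℝ} (hθ : θ ∈ Icc (-(bb α)) 0) :
    IntegrableOn (fun l => G α γ x θ l) (Ioi 0) := by
  refine Integrable.mono' (integrable_smallB hα hγ hx)
    ((cont_G_l hα hγ θ).aestronglyMeasurable) ?_
  refine (ae_restrict_iff' measurableSet_Ioi).2 (ae_of_all _ fun l hl => ?_)
  exact norm_G_le hα hγ hx hθ (le_of_lt hl)

include hα hγ hx in
lemma integrable_G' {θ : ℝ} (hθ : θ ∈ Icc (-(bb α)) 0) :
    IntegrableOn (fun l => G' α γ x θ l) (Ioi 0) := by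
  refine Integrable.mono' (integrable_bigB hα hγ hx)
    ((cont_G'_l hα hγ θ).aestronglyMeasurable) ?_
  refine (ae_restrict_iff' measurableSet_Ioi).2 (ae_of_all _ fun l hl => ?_)
  exact norm_G'_le hα hγ hx hθ (le_of_lt hl)

include hα hγ hx in
lemma integral_G'_zero {θ : ℝ} (hθ : θ ∈ Ioo (-(bb α)) 0) :
    ∫ l in Ioi (0:ℝ), G' α γ x θ l = 0 := by
  have hπ := Real.pi_pos
  have hbπ := b_lt hα
  have hsin : Real.sin θ < 0 :=
    Real.sin_neg_of_neg_of_neg_pi_lt hθ.2 (by linarith [hθ.1])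
  have hcos : 0 ≤ Real.cos (α * θ) := by
    apply Real.cos_nonneg_of_mem_Icc
    have hab := ab_eq hα
    constructor
    · have : α * (-(bb α)) ≤ α * θ := mul_le_mul_of_nonneg_left hθ.1.le (by linarith)
      rw [mul_neg, hab] at this; linarith
    · nlinarith [hθ.2.le]
  have hc : 0 < x * (-Real.sin θ) := mul_pos hx (by linarith)
  have hcont : ContinuousWithinAt (fun l : ℝ => Complex.I * ↑l * G α γ x θ l) (Ici 0) 0 :=
    (((continuous_const.mul Complex.continuous_ofReal).mul
      (cont_G_l hα hγ θ)).continuousAt).continuousWithinAt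
  have hderiv : ∀ l ∈ Ioi (0:ℝ),
      HasDerivAt (fun l : ℝ => Complex.I * ↑l * G α γ x θ l) (G' α γ x θ l) l :=
    fun l hl => hasDerivAt_l α γ x θ hl
  have htend : Tendsto (fun l : ℝ => Complex.I * ↑l * G α γ x θ l) atTop (𝓝 0) := by
    refine squeeze_zero_norm' ?_ (tendsto_rpow_mul_exp_neg_mul_atTop_nhds_zero (γ + 1) _ hc)
    · filter_upwards [eventually_gt_atTop (0:ℝ)] with l hl
      have hlγ : (0:ℝ) ≤ l ^ γ := Real.rpow_nonneg hl.le _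
      rw [norm_mul, norm_mul, Complex.norm_I, one_mul, Complex.norm_real, Real.norm_eq_abs,
        abs_of_pos hl, norm_G α γ x θ hl.le]
      have e1 : l ^ (γ + 1) = l ^ γ * l := by rw [Real.rpow_add hl, Real.rpow_one]
      rw [e1]
      have h2 : l * x * Real.sin θ - l ^ α * Real.cos (α * θ) ≤ -(x * (-Real.sin θ)) * l := by
        nlinarith [mul_nonneg (Real.rpow_nonneg hl.le α) hcos]
      calc l * (l ^ γ * Real.exp (l * x * Real.sin θ - l ^ α * Real.cos (α * θ)))
          ≤ l * (l ^ γ * Real.exp (-(x * (-Real.sin θ)) * l)) := by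
            apply mul_le_mul_of_nonneg_left
              (mul_le_mul_of_nonneg_left (Real.exp_le_exp.2 h2) hlγ) hl.le
        _ = l ^ γ * l * Real.exp (-(x * (-Real.sin θ)) * l) := by ring
  have := integral_Ioi_of_hasDerivAt_of_tendsto hcont hderiv
    (integrable_G' hα hγ hx (Ioo_subset_Icc_self hθ)) htend
  simpa using this

include hα hγ hx in
lemma hasDeriv_F {θ₀ : ℝ} (hθ₀ : θ₀ ∈ Ioo (-(bb α)) 0) :
    HasDerivAt (fun θ => ∫ l in Ioi (0:ℝ), G α γ x θ l) 0 θ₀ := by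
  set ε := min (θ₀ + bb α) (-θ₀) with hε
  have hε0 : 0 < ε := lt_min (by linarith [hθ₀.1]) (by linarith [hθ₀.2])
  have hball : Metric.ball θ₀ ε ⊆ Icc (-(bb α)) 0 := by
    intro θ hθ'
    rw [Metric.mem_ball, Real.dist_eq, abs_lt] at hθ'
    have h1 := min_le_left (θ₀ + bb α) (-θ₀)
    have h2 := min_le_right (θ₀ + bb α) (-θ₀)
    exact ⟨by linarith [hθ'.1], by linarith [hθ'.2]⟩
  have hmeas : ∀ᶠ θ in nhds θ₀,
      AEStronglyMeasurable (fun l => G α γ x θ l) (volume.restrict (Ioi 0)) :=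
    Eventually.of_forall fun θ => (cont_G_l hα hγ θ).aestronglyMeasurable
  have hint : Integrable (fun l => G α γ x θ₀ l) (volume.restrict (Ioi 0)) :=
    integrable_G hα hγ hx (Ioo_subset_Icc_self hθ₀)
  have hmeas' : AEStronglyMeasurable (fun l => G' α γ x θ₀ l) (volume.restrict (Ioi 0)) :=
    (cont_G'_l hα hγ θ₀).aestronglyMeasurable
  have hbound : ∀ᵐ l ∂(volume.restrict (Ioi 0)), ∀ θ ∈ Metric.ball θ₀ ε,
      ‖G' α γ x θ l‖ ≤ bigB α γ x l := by
    refine (ae_restrict_iff' measurableSet_Ioi).2 (ae_of_all _ fun l hl θ hθ => ?_)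
    exact norm_G'_le hα hγ hx (hball hθ) (le_of_lt hl)
  have hdiff : ∀ᵐ l ∂(volume.restrict (Ioi 0)), ∀ θ ∈ Metric.ball θ₀ ε,
      HasDerivAt (fun θ => G α γ x θ l) (G' α γ x θ l) θ :=
    ae_of_all _ fun l θ _ => hasDerivAt_theta α γ x θ l
  have H := hasDerivAt_integral_of_dominated_loc_of_deriv_le (Metric.ball_mem_nhds θ₀ hε0) hmeas hint hmeas' hbound
    (integrable_bigB hα hγ hx) hdiff
  have h0 := integral_G'_zero hα hγ hx hθ₀
  exact h0 ▸ H.2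


include hα hγ hx in
lemma contOn_F : ContinuousOn (fun θ => ∫ l in Ioi (0:ℝ), G α γ x θ l) (Icc (-(bb α)) 0) := by
  refine continuousOn_of_dominated (bound := smallB α γ x)
    (fun θ _ => (cont_G_l hα hγ θ).aestronglyMeasurable) ?_ (integrable_smallB hα hγ hx) ?_
  · intro θ hθ
    refine (ae_restrict_iff' measurableSet_Ioi).2 (ae_of_all _ fun l hl => ?_)
    exact norm_G_le hα hγ hx hθ (le_of_lt hl)
  · exact ae_of_all _ fun l => (cont_G_theta l).continuousOn

include hα hγ hx in
lemma F_const :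
    (∫ l in Ioi (0:ℝ), G α γ x 0 l) = ∫ l in Ioi (0:ℝ), G α γ x (-(bb α)) l := by
  set F := fun θ => ∫ l in Ioi (0:ℝ), G α γ x θ l with hF
  have hb0 := b_pos hα
  have key : ∀ ε ∈ Ioc (0:ℝ) (bb α), F 0 = F (-(bb α) + ε) := by
    intro ε hε
    refine constant_of_has_deriv_right_zero (f := F) (a := -(bb α) + ε) (b := 0)
      ((contOn_F hα hγ hx).mono (Icc_subset_Icc (by linarith [hε.1]) le_rfl)) ?_ 0
      (Set.mem_Icc.2 ⟨by linarith [hε.2], le_rfl⟩)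
    intro θ hθ
    exact (hasDeriv_F hα hγ hx ⟨by linarith [hθ.1, hε.1], hθ.2⟩).hasDerivWithinAt
  have h1 : Tendsto (fun ε => F (-(bb α) + ε)) (𝓝[>] (0:ℝ)) (𝓝 (F (-(bb α)))) := by
    have hc : ContinuousWithinAt F (Icc (-(bb α)) 0) (-(bb α)) :=
      (contOn_F hα hγ hx) _ (Set.mem_Icc.2 ⟨le_rfl, by linarith⟩)
    apply hc.tendsto.comp
    refine tendsto_nhdsWithin_of_tendsto_nhds_of_eventually_within _ ?_ ?_
    · have : Tendsto (fun ε : ℝ => -(bb α) + ε) (𝓝[>] (0:ℝ)) (𝓝 (-(bb α) + 0)) :=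
        ((continuous_const.add continuous_id).tendsto 0).mono_left nhdsWithin_le_nhds
      simpa using this
    · filter_upwards [Ioc_mem_nhdsGT_of_mem ⟨le_rfl, hb0⟩] with ε hε
      exact Set.mem_Icc.2 ⟨by linarith [hε.1], by linarith [hε.2]⟩
  have h2 : Tendsto (fun ε => F (-(bb α) + ε)) (𝓝[>] (0:ℝ)) (𝓝 (F 0)) := by
    refine Tendsto.congr' ?_ tendsto_const_nhds
    filter_upwards [Ioc_mem_nhdsGT_of_mem ⟨le_rfl, hb0⟩] with ε hε
    exact key ε hε
  exact tendsto_nhds_unique h2 h1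

lemma exp_I_pi_div_two : Complex.exp (Complex.I * ↑(Real.pi / 2)) = Complex.I := by
  rw [exp_I_mul]; simp

lemma match0 {l : ℝ} (hl : 0 < l) :
    (l:ℂ) ^ (γ:ℂ) * Complex.exp (-(Complex.I * ↑l * ↑x) - (l:ℂ) ^ (α:ℂ))
      = G α γ x 0 l := by
  rw [G, ← Complex.ofReal_cpow hl.le, ← Complex.ofReal_cpow hl.le]
  norm_num [Complex.exp_zero]

include hα in
lemma matchb {l : ℝ} (hl : 0 < l) :
    Complex.exp (-(Complex.I * ((((γ + 1) * Real.pi / (2 * α) : ℝ)) : ℂ))) *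
      ((l:ℂ) ^ (γ:ℂ) * Complex.exp (-((l:ℂ) * (x:ℂ)) *
          Complex.exp (Complex.I * (((α - 1) * Real.pi / (2 * α) : ℝ) : ℂ))
        - (l:ℂ) ^ (α:ℂ) * Complex.exp (-(Complex.I * ((Real.pi / 2 : ℝ) : ℂ)))))
      = G α γ x (-(bb α)) l := by
  have hα0 : (α:ℂ) ≠ 0 := by
    simpa using (show (0:ℝ) < α by linarith).ne'
  have hb2 : Complex.exp (Complex.I * (((α - 1) * Real.pi / (2 * α) : ℝ) : ℂ))
      = Complex.I * Complex.exp (Complex.I * ((-(bb α) : ℝ) : ℂ)) := by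
    have hr : (α - 1) * Real.pi / (2 * α) = Real.pi / 2 + -(bb α) := by
      rw [bb]; field_simp; ring
    rw [hr, Complex.ofReal_add, mul_add, Complex.exp_add, exp_I_pi_div_two]
  have hb1 : (Complex.I * (α:ℂ) * ((-(bb α) : ℝ) : ℂ)) = -(Complex.I * ((Real.pi/2 : ℝ) : ℂ)) := by
    rw [bb]
    push_cast
    field_simp
  rw [G, ← Complex.ofReal_cpow hl.le, ← Complex.ofReal_cpow hl.le, hb1, hb2]
  rw [show ∀ (E0 P E1 : ℂ), E0 * (P * E1) = P * (E0 * E1) from fun _ _ _ => by ring,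
    ← Complex.exp_add]
  congr 2
  rw [bb]
  push_cast
  ring

end Main


end ContourAux4


open ContourAux4

/-- Contour rotation identity (Cauchy's theorem applied to
`z ↦ z^γ exp(−izx − z^α)` on a circular sector of opening angle `π/(2α)`):
for `α ∈ (1,2]`, `γ > 0` and `x > 0`,
`∫₀^∞ ξ^γ exp(−iξx − ξ^α) dξ
  = e^{−i(γ+1)π/(2α)} ∫₀^∞ λ^γ exp(−λx·e^{i(α−1)π/(2α)} − λ^α·e^{−iπ/2}) dλ`,
and both improper complex integrals converge absolutely. -/
theorem contour_rotation_identity (α γ x : ℝ) (hα : 1 < α) (hα' : α ≤ 2)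
    (hγ : 0 < γ) (hx : 0 < x) :
    IntegrableOn
      (fun ξ : ℝ => (ξ : ℂ) ^ (γ : ℂ) *
        Complex.exp (-(Complex.I * (ξ : ℂ) * (x : ℂ)) - (ξ : ℂ) ^ (α : ℂ)))
      (Set.Ioi 0) ∧
    IntegrableOn
      (fun l : ℝ => (l : ℂ) ^ (γ : ℂ) *
        Complex.exp (-((l : ℂ) * (x : ℂ)) *
            Complex.exp (Complex.I * (((α - 1) * Real.pi / (2 * α) : ℝ) : ℂ))
          - (l : ℂ) ^ (α : ℂ) * Complex.exp (-(Complex.I * ((Real.pi / 2 : ℝ) : ℂ)))))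
      (Set.Ioi 0) ∧
    (∫ ξ in Set.Ioi (0 : ℝ), (ξ : ℂ) ^ (γ : ℂ) *
        Complex.exp (-(Complex.I * (ξ : ℂ) * (x : ℂ)) - (ξ : ℂ) ^ (α : ℂ)))
      = Complex.exp (-(Complex.I * (((γ + 1) * Real.pi / (2 * α) : ℝ) : ℂ))) *
        ∫ l in Set.Ioi (0 : ℝ), (l : ℂ) ^ (γ : ℂ) *
          Complex.exp (-((l : ℂ) * (x : ℂ)) *
              Complex.exp (Complex.I * (((α - 1) * Real.pi / (2 * α) : ℝ) : ℂ))
            - (l : ℂ) ^ (α : ℂ) * Complex.exp (-(Complex.I * ((Real.pi / 2 : ℝ) : ℂ)))) := by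
  have hb0 := b_pos hα
  have h0mem : (0:ℝ) ∈ Icc (-(bb α)) 0 := Set.mem_Icc.2 ⟨by linarith, le_rfl⟩
  have hbmem : (-(bb α)) ∈ Icc (-(bb α)) 0 := Set.mem_Icc.2 ⟨le_rfl, by linarith⟩
  set stmtR := fun l : ℝ => (l : ℂ) ^ (γ : ℂ) *
    Complex.exp (-((l : ℂ) * (x : ℂ)) *
        Complex.exp (Complex.I * (((α - 1) * Real.pi / (2 * α) : ℝ) : ℂ))
      - (l : ℂ) ^ (α : ℂ) * Complex.exp (-(Complex.I * ((Real.pi / 2 : ℝ) : ℂ)))) with hstmtR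
  have hEq0 : EqOn (fun l : ℝ => G α γ x 0 l)
      (fun ξ : ℝ => (ξ : ℂ) ^ (γ : ℂ) *
        Complex.exp (-(Complex.I * (ξ : ℂ) * (x : ℂ)) - (ξ : ℂ) ^ (α : ℂ))) (Ioi 0) :=
    fun l hl => (match0 hl).symm
  have hEqb : EqOn (fun l : ℝ =>
      Complex.exp (Complex.I * ((((γ + 1) * Real.pi / (2 * α) : ℝ)) : ℂ)) * G α γ x (-(bb α)) l)
      stmtR (Ioi 0) := by
    intro l hl
    simp only
    rw [← matchb hα hl, ← mul_assoc, ← Complex.exp_add, add_neg_cancel, Complex.exp_zero,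
      one_mul]
  refine ⟨IntegrableOn.congr_fun (integrable_G hα hγ hx h0mem) hEq0 measurableSet_Ioi,
    IntegrableOn.congr_fun ((integrable_G hα hγ hx hbmem).const_mul _) hEqb measurableSet_Ioi, ?_⟩
  calc (∫ ξ in Set.Ioi (0 : ℝ), (ξ : ℂ) ^ (γ : ℂ) *
        Complex.exp (-(Complex.I * (ξ : ℂ) * (x : ℂ)) - (ξ : ℂ) ^ (α : ℂ)))
      = ∫ l in Ioi (0:ℝ), G α γ x 0 l := (setIntegral_congr_fun measurableSet_Ioi hEq0).symm
    _ = ∫ l in Ioi (0:ℝ), G α γ x (-(bb α)) l := F_const hα hγ hx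
    _ = ∫ l in Ioi (0:ℝ), Complex.exp (-(Complex.I * ((((γ + 1) * Real.pi / (2 * α) : ℝ)) : ℂ)))
          * stmtR l :=
        setIntegral_congr_fun measurableSet_Ioi (fun l hl => (matchb hα hl).symm)
    _ = _ := by rw [integral_const_mul]
end
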